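/- For every word u over a nonempty finite alphabet A, h(u) ≥ 1 + ρ(u). -/

import Mathlib

/-- Simon's congruence of order `k`: `u` and `v` have the same subwords
(subsequences) of length at most `k`. -/
def SimonCong {A : Type*} (k : ℕ) (u v : List A) : Prop :=
  ∀ s : List A, s.length ≤ k → (s.Sublist u ↔ s.Sublist v)

/-- The subword distance `δ(u,v) = sup {k | u ∼ₖ v} ∈ ℕ ∪ {∞}`. -/
noncomputable def delta {A : Type*} (u v : List A) : ℕ∞ :=
  ⨆ k ∈ {k : ℕ | SimonCong k u v}, (k : ℕ∞)

/-- Right side distance `r(u,t) = δ(u, u·t)`. -/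
noncomputable def sideR {A : Type*} (u t : List A) : ℕ∞ :=
  delta u (u ++ t)

/-- Left side distance `ℓ(t,u) = δ(t·u, u)`. -/
noncomputable def sideL {A : Type*} (t u : List A) : ℕ∞ :=
  delta (t ++ u) u

/-- The piecewise complexity `h(u)`: the least `n` such that every word
`v` with `u ∼ₙ v` equals `u`. -/
noncomputable def pieceH {A : Type*} (u : List A) : ℕ :=
  sInf {n : ℕ | ∀ v : List A, SimonCong n u v → v = u}

/-- A word `u` is `m`-reduced if no strict subword of `u` is `∼ₘ`-equivalent to `u`. -/
def MReduced {A : Type*} (m : ℕ) (u : List A) : Prop :=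
  ∀ u' : List A, u'.Sublist u → u' ≠ u → ¬ SimonCong m u' u

/-- The piecewise minimality index `ρ(u)`: the least `m` such that `u` is `m`-reduced. -/
noncomputable def rho {A : Type*} (u : List A) : ℕ :=
  sInf {m : ℕ | MReduced m u}
private lemma delete_one {A : Type*} {u' u : List A} (h : u'.Sublist u) (hne : u' ≠ u) :
    ∃ x a y, u = x ++ a :: y ∧ u'.Sublist (x ++ y) := by
  induction h with
  | slnil => exact absurd rfl hne
  | cons a h ih => exact ⟨[], a, _, rfl, h⟩
  | @cons_cons l₁ l₂ a h ih =>
    by_cases hl : l₁ = l₂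
    · subst hl; exact absurd rfl hne
    · obtain ⟨x, b, y, rfl, hs⟩ := ih hl
      exact ⟨a :: x, b, y, rfl, hs.cons₂ a⟩

private lemma dup_cong {A : Type*} {m : ℕ} {x y : List A} {a : A}
    (h : SimonCong m (x ++ y) (x ++ a :: y)) :
    SimonCong (m + 1) (x ++ a :: y) (x ++ a :: a :: y) := by
  intro s hs
  constructor
  · intro hsub
    exact hsub.trans ((List.sublist_cons_self a (a :: y)).append_left x)
  · intro hsub
    obtain ⟨p, q, rfl, hp, hq⟩ := List.sublist_append_iff.mp hsub
    rcases List.sublist_cons_iff.mp hq with hq1 | ⟨q', rfl, hq'⟩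
    · exact hp.append hq1
    rcases List.sublist_cons_iff.mp hq' with hq1 | ⟨q'', rfl, hq''⟩
    · exact hp.append (hq1.cons₂ a)
    -- s = p ++ a :: a :: q'', p <+ x, q'' <+ y
    have ht : (p ++ a :: q'').Sublist (x ++ a :: y) := hp.append (hq''.cons₂ a)
    have hlen : (p ++ a :: q'').length ≤ m := by
      simp only [List.length_append, List.length_cons] at hs ⊢
      omega
    have ht2 : (p ++ a :: q'').Sublist (x ++ y) := ((h _ hlen).mpr ht)
    obtain ⟨r₁, r₂, heq, hr1, hr2⟩ := List.sublist_append_iff.mp ht2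
    by_cases hle : r₁.length ≤ p.length
    · -- a :: q'' is a sublist of r₂
      have hdrop : (a :: q'').Sublist r₂ := by
        have h1 : a :: q'' = (p ++ a :: q'').drop p.length := by simp
        have h2 : r₂ = (p ++ a :: q'').drop r₁.length := by
          rw [heq]; simp
        rw [h1, h2, show p.length = r₁.length + (p.length - r₁.length) by omega,
          ← List.drop_drop]
        exact List.drop_sublist _ _
      have : (a :: (a :: q'')).Sublist (a :: y) := (hdrop.trans hr2).cons₂ a
      exact hp.append this
    · -- p ++ [a] is a sublist of r₁
      have htake : (p ++ [a]).Sublist r₁ := by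
        have h1 : p ++ [a] = (p ++ a :: q'').take (p.length + 1) := by
          simp [List.take_append, List.take_cons]
        have h2 : r₁ = (p ++ a :: q'').take r₁.length := by
          rw [heq]; simp
        rw [h1, h2, show p.length + 1 = min (p.length + 1) r₁.length by omega,
          ← List.take_take]
        exact List.take_sublist _ _
      have hax : (p ++ [a]).Sublist x := htake.trans hr1
      have : ((p ++ [a]) ++ a :: q'').Sublist (x ++ a :: y) := hax.append (hq''.cons₂ a)
      simpa using this

theorem stmt9 {A : Type*} [Fintype A] [Nonempty A] (u : List A) :
    pieceH u ≥ 1 + rho u := by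
  set S : Set ℕ := {n : ℕ | ∀ v : List A, SimonCong n u v → v = u} with hS
  have hSne : S.Nonempty := by
    refine ⟨u.length + 1, fun v hv => ?_⟩
    have huv : u.Sublist v := (hv u (by omega)).mp (List.Sublist.refl u)
    by_contra hne
    have hlt : u.length < v.length := by
      rcases Nat.lt_or_ge u.length v.length with h | h
      · exact h
      · exact absurd (huv.eq_of_length (le_antisymm huv.length_le h)).symm hne
    have hsub : (v.take (u.length + 1)).Sublist u := by
      refine (hv _ ?_).mpr (List.take_sublist _ _)
      simp [Nat.min_le_left]
    have := hsub.length_le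
    rw [List.length_take] at this
    omega
  have hmem : pieceH u ∈ S := Nat.sInf_mem hSne
  have hpos : pieceH u ≠ 0 := by
    intro h0
    have := hmem (u ++ [Classical.arbitrary A]) (by
      intro s hs
      rw [h0] at hs
      interval_cases hsl : s.length
      · rw [List.length_eq_zero_iff] at hsl
        subst hsl
        simp)
    have := congrArg List.length this
    simp at this
  have hred : MReduced (pieceH u - 1) u := by
    intro u' hsub hne hcong
    obtain ⟨x, a, y, huxy, hsub'⟩ := delete_one hsub hne
    have h2 : SimonCong (pieceH u - 1) (x ++ y) (x ++ a :: y) := by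
      intro s hs
      constructor
      · intro h; exact h.trans ((List.sublist_cons_self a y).append_left x)
      · intro h
        rw [← huxy] at h
        exact ((hcong s hs).mpr h).trans hsub'
    have h3 := dup_cong h2
    rw [show pieceH u - 1 + 1 = pieceH u by omega] at h3
    rw [← huxy] at h3
    have := hmem _ h3
    have := congrArg List.length this
    rw [huxy] at this
    simp at this
  have hrho : rho u ≤ pieceH u - 1 := Nat.sInf_le hred
  omega
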